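/- In the low-rate regime, the privacy-forgery-suppression function admits the first-order expansion with gradient ∇R(0,0) = (log(q_1/p_1) − D(q‖p), D(q‖p) − log(q_n/p_n)). Concretely: if q ≠ p and the indices i, j satisfy q_1/p_1 = ... = q_i/p_i < q_{i+1}/p_{i+1} and q_{j−1}/p_{j−1} > q_j/p_j = ... = q_n/p_n, then for the function R(ρ,σ) = D((q̃ + ρe_1 − σe_m)/(1+ρ−σ) ‖ p̃) — where q̃ = (Q_i, q_{i+1},...,q_{j−1}, S_j), p̃ = (P_i, p_{i+1},...,p_{j−1}, T_j), m = j−i+1, and e_1, e_m are standard basis vectors — the partial derivatives at (0,0) are ∂R/∂ρ(0,0) = log(q_1/p_1) − D(q‖p) and ∂R/∂σ(0,0) = D(q‖p) − log(q_n/p_n). -/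

import Mathlib

lemma key_deriv (A P a' c' : ℝ) (hA : A ≠ 0) (hP : P ≠ 0) :
    HasDerivAt (fun t : ℝ => (A + a' * t) / (1 + c' * t) *
        Real.logb 2 ((A + a' * t) / ((1 + c' * t) * P)))
      ((a' - A * c') * Real.logb 2 (A / P) + (a' - A * c') / Real.log 2) 0 := by
  have h2 : Real.log 2 ≠ 0 := ne_of_gt (Real.log_pos one_lt_two)
  have ha : HasDerivAt (fun t : ℝ => A + a' * t) a' 0 := by
    simpa using ((hasDerivAt_id (0:ℝ)).const_mul a').const_add A
  have hu : HasDerivAt (fun t : ℝ => 1 + c' * t) c' 0 := by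
    simpa using ((hasDerivAt_id (0:ℝ)).const_mul c').const_add 1
  have hu0 : (1 + c' * (0:ℝ)) ≠ 0 := by norm_num
  have hq := ha.div hu hu0
  have huP : HasDerivAt (fun t : ℝ => (1 + c' * t) * P) (c' * P) 0 := by
    simpa using hu.mul_const P
  have huP0 : (1 + c' * (0:ℝ)) * P ≠ 0 := by simpa using hP
  have hy := ha.div huP huP0
  have hy0 : (A + a' * (0:ℝ)) / ((1 + c' * (0:ℝ)) * P) ≠ 0 := by
    simp [hA, hP]
  have hlog := (Real.hasDerivAt_log hy0).comp 0 hy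
  have hlogb := hlog.div_const (Real.log 2)
  have hlogb' : HasDerivAt (fun t : ℝ => Real.logb 2 ((A + a' * t) / ((1 + c' * t) * P)))
      ((((A + a' * (0:ℝ)) / ((1 + c' * (0:ℝ)) * P))⁻¹ *
        ((a' * ((1 + c' * (0:ℝ)) * P) - (A + a' * (0:ℝ)) * (c' * P)) / ((1 + c' * (0:ℝ)) * P) ^ 2)) /
        Real.log 2) 0 := by
    simpa only [Real.logb, Function.comp, Pi.div_apply] using hlogb
  have := hq.mul hlogb'
  convert this using 1
  · rfl
  · rfl
  · rfl
  have hAP : (A + a' * (0:ℝ)) / ((1 + c' * (0:ℝ)) * P) = A / P := by norm_num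
  rw [hAP, Pi.div_apply]
  field_simp
  ring

theorem gradient_at_origin
    (n : ℕ) (hn : 2 ≤ n) (q p : ℕ → ℝ)
    (hq : ∀ k ∈ Finset.Icc 1 n, 0 < q k) (hp : ∀ k ∈ Finset.Icc 1 n, 0 < p k)
    (hqsum : ∑ k ∈ Finset.Icc 1 n, q k = 1) (hpsum : ∑ k ∈ Finset.Icc 1 n, p k = 1)
    (hmono : ∀ k, 1 ≤ k → k < n → q k / p k ≤ q (k+1) / p (k+1))
    (hne : ∃ k ∈ Finset.Icc 1 n, q k ≠ p k)
    (i j : ℕ) (hi : 1 ≤ i) (hij : i < j) (hj : j ≤ n)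
    (hieq : ∀ k, 1 ≤ k → k ≤ i → q k / p k = q 1 / p 1)
    (hilt : q i / p i < q (i+1) / p (i+1))
    (hjeq : ∀ k, j ≤ k → k ≤ n → q k / p k = q n / p n)
    (hjlt : q (j-1) / p (j-1) < q j / p j)
    (R : ℝ → ℝ → ℝ)
    (hR : ∀ ρ σ : ℝ, R ρ σ =
        ((∑ m ∈ Finset.Icc 1 i, q m) + ρ) / (1 + ρ - σ)
          * Real.logb 2 (((∑ m ∈ Finset.Icc 1 i, q m) + ρ)
              / ((1 + ρ - σ) * (∑ m ∈ Finset.Icc 1 i, p m)))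
        + (∑ k ∈ Finset.Icc (i+1) (j-1), q k / (1 + ρ - σ)
            * Real.logb 2 (q k / ((1 + ρ - σ) * p k)))
        + ((∑ m ∈ Finset.Icc j n, q m) - σ) / (1 + ρ - σ)
            * Real.logb 2 (((∑ m ∈ Finset.Icc j n, q m) - σ)
                / ((1 + ρ - σ) * (∑ m ∈ Finset.Icc j n, p m)))) :
    HasDerivAt (fun ρ => R ρ 0)
      (Real.logb 2 (q 1 / p 1)
        - ∑ k ∈ Finset.Icc 1 n, q k * Real.logb 2 (q k / p k)) 0 ∧
    HasDerivAt (fun σ => R 0 σ)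
      ((∑ k ∈ Finset.Icc 1 n, q k * Real.logb 2 (q k / p k))
        - Real.logb 2 (q n / p n)) 0 := by
  have h2 : Real.log 2 ≠ 0 := ne_of_gt (Real.log_pos one_lt_two)
  set Q : ℝ := ∑ m ∈ Finset.Icc 1 i, q m with hQdef
  set P : ℝ := ∑ m ∈ Finset.Icc 1 i, p m with hPdef
  set S : ℝ := ∑ m ∈ Finset.Icc j n, q m with hSdef
  set T : ℝ := ∑ m ∈ Finset.Icc j n, p m with hTdef
  have hin : i ≤ n := le_trans (le_of_lt hij) hj
  have hsubi : Finset.Icc 1 i ⊆ Finset.Icc 1 n := Finset.Icc_subset_Icc_right hin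
  have hsubj : Finset.Icc j n ⊆ Finset.Icc 1 n :=
    Finset.Icc_subset_Icc_left (le_trans hi (le_of_lt hij))
  have hsubm : Finset.Icc (i+1) (j-1) ⊆ Finset.Icc 1 n := by
    apply Finset.Icc_subset_Icc (by omega) (by omega)
  have hnei : (Finset.Icc 1 i).Nonempty := Finset.nonempty_Icc.mpr hi
  have hnej : (Finset.Icc j n).Nonempty := Finset.nonempty_Icc.mpr hj
  have hQpos : 0 < Q := Finset.sum_pos (fun k hk => hq k (hsubi hk)) hnei
  have hPpos : 0 < P := Finset.sum_pos (fun k hk => hp k (hsubi hk)) hnei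
  have hSpos : 0 < S := Finset.sum_pos (fun k hk => hq k (hsubj hk)) hnej
  have hTpos : 0 < T := Finset.sum_pos (fun k hk => hp k (hsubj hk)) hnej
  -- ratio identities
  have hQP : Q = q 1 / p 1 * P := by
    rw [hQdef, hPdef, Finset.mul_sum]
    refine Finset.sum_congr rfl fun k hk => ?_
    rw [Finset.mem_Icc] at hk
    have hpk : p k ≠ 0 := ne_of_gt (hp k (hsubi (Finset.mem_Icc.mpr hk)))
    rw [← hieq k hk.1 hk.2, div_mul_cancel₀ _ hpk]
  have hST : S = q n / p n * T := by
    rw [hSdef, hTdef, Finset.mul_sum]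
    refine Finset.sum_congr rfl fun k hk => ?_
    rw [Finset.mem_Icc] at hk
    have hpk : p k ≠ 0 := ne_of_gt (hp k (hsubj (Finset.mem_Icc.mpr hk)))
    rw [← hjeq k hk.1 hk.2, div_mul_cancel₀ _ hpk]
  have hratio1 : Q / P = q 1 / p 1 := by
    rw [hQP, mul_div_assoc, div_self (ne_of_gt hPpos), mul_one]
  have hratio2 : S / T = q n / p n := by
    rw [hST, mul_div_assoc, div_self (ne_of_gt hTpos), mul_one]
  -- sum splitting
  have hsplit : ∀ f : ℕ → ℝ, ∑ k ∈ Finset.Icc 1 n, f k =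
      (∑ k ∈ Finset.Icc 1 i, f k) + (∑ k ∈ Finset.Icc (i+1) (j-1), f k)
        + (∑ k ∈ Finset.Icc j n, f k) := by
    intro f
    have e1 : Finset.Icc 1 n = Finset.Ioc 0 n := by rw [← Finset.Icc_add_one_left_eq_Ioc]; rfl
    have e2 : Finset.Icc 1 i = Finset.Ioc 0 i := by rw [← Finset.Icc_add_one_left_eq_Ioc]; rfl
    have e3 : Finset.Icc (i+1) (j-1) = Finset.Ioc i (j-1) := by rw [← Finset.Icc_add_one_left_eq_Ioc]
    have e4 : Finset.Icc j n = Finset.Ioc (j-1) n := by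
      rw [← Finset.Icc_add_one_left_eq_Ioc]; congr 1; omega
    rw [e1, e2, e3, e4,
      Finset.sum_Ioc_consecutive f (Nat.zero_le i) (by omega : i ≤ j - 1),
      Finset.sum_Ioc_consecutive f (Nat.zero_le (j-1)) (by omega : j - 1 ≤ n)]
  have hsum1 : Q + (∑ k ∈ Finset.Icc (i+1) (j-1), q k) + S = 1 := by
    rw [← hsplit q]; exact hqsum
  -- KL decomposition
  have hD : ∑ k ∈ Finset.Icc 1 n, q k * Real.logb 2 (q k / p k) =
      Q * Real.logb 2 (Q / P)
      + (∑ k ∈ Finset.Icc (i+1) (j-1), q k * Real.logb 2 (q k / p k))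
      + S * Real.logb 2 (S / T) := by
    rw [hsplit (fun k => q k * Real.logb 2 (q k / p k))]
    congr 1
    · congr 1
      rw [hQdef, Finset.sum_mul, hratio1]
      refine Finset.sum_congr rfl fun k hk => ?_
      rw [Finset.mem_Icc] at hk
      rw [hieq k hk.1 hk.2]
    · rw [hSdef, Finset.sum_mul, hratio2]
      refine Finset.sum_congr rfl fun k hk => ?_
      rw [Finset.mem_Icc] at hk
      rw [hjeq k hk.1 hk.2]
  have hmidne : ∀ k ∈ Finset.Icc (i+1) (j-1), q k ≠ 0 ∧ p k ≠ 0 := fun k hk =>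
    ⟨ne_of_gt (hq k (hsubm hk)), ne_of_gt (hp k (hsubm hk))⟩
  constructor
  · -- ρ derivative
    have hF1 := key_deriv Q P 1 1 (ne_of_gt hQpos) (ne_of_gt hPpos)
    have hF3 := key_deriv S T 0 1 (ne_of_gt hSpos) (ne_of_gt hTpos)
    have hFmid : HasDerivAt
        (fun t : ℝ => ∑ k ∈ Finset.Icc (i+1) (j-1),
          (q k + 0 * t) / (1 + 1 * t) * Real.logb 2 ((q k + 0 * t) / ((1 + 1 * t) * p k)))
        (∑ k ∈ Finset.Icc (i+1) (j-1),
          ((0 - q k * 1) * Real.logb 2 (q k / p k) + (0 - q k * 1) / Real.log 2)) 0 :=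
      HasDerivAt.fun_sum fun k hk => key_deriv (q k) (p k) 0 1 (hmidne k hk).1 (hmidne k hk).2
    have htot := (hF1.add hFmid).add hF3
    have heq : (fun t : ℝ => ((Q + 1 * t) / (1 + 1 * t) * Real.logb 2 ((Q + 1 * t) / ((1 + 1 * t) * P))
          + ∑ k ∈ Finset.Icc (i+1) (j-1),
            (q k + 0 * t) / (1 + 1 * t) * Real.logb 2 ((q k + 0 * t) / ((1 + 1 * t) * p k)))
          + (S + 0 * t) / (1 + 1 * t) * Real.logb 2 ((S + 0 * t) / ((1 + 1 * t) * T)))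
        = (fun ρ => R ρ 0) := by
      funext t
      rw [hR]
      norm_num
    rw [← heq]
    convert htot using 1
    · rfl
    · rfl
    · rfl
    rw [hD, hratio1, hratio2]
    have eA1 : ∑ k ∈ Finset.Icc (i+1) (j-1), (0 - q k * 1) * Real.logb 2 (q k / p k)
        = -(∑ k ∈ Finset.Icc (i+1) (j-1), q k * Real.logb 2 (q k / p k)) := by
      rw [← Finset.sum_neg_distrib]
      exact Finset.sum_congr rfl fun k _ => by ring
    have eA2 : ∑ k ∈ Finset.Icc (i+1) (j-1), (0 - q k * 1)
        = -(∑ k ∈ Finset.Icc (i+1) (j-1), q k) := by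
      rw [← Finset.sum_neg_distrib]
      exact Finset.sum_congr rfl fun k _ => by ring
    rw [Finset.sum_add_distrib, ← Finset.sum_div, eA1, eA2]
    linear_combination hsum1 / Real.log 2
  · -- σ derivative
    have hF1 := key_deriv Q P 0 (-1) (ne_of_gt hQpos) (ne_of_gt hPpos)
    have hF3 := key_deriv S T (-1) (-1) (ne_of_gt hSpos) (ne_of_gt hTpos)
    have hFmid : HasDerivAt
        (fun t : ℝ => ∑ k ∈ Finset.Icc (i+1) (j-1),
          (q k + 0 * t) / (1 + (-1) * t) * Real.logb 2 ((q k + 0 * t) / ((1 + (-1) * t) * p k)))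
        (∑ k ∈ Finset.Icc (i+1) (j-1),
          ((0 - q k * (-1)) * Real.logb 2 (q k / p k) + (0 - q k * (-1)) / Real.log 2)) 0 :=
      HasDerivAt.fun_sum fun k hk => key_deriv (q k) (p k) 0 (-1) (hmidne k hk).1 (hmidne k hk).2
    have htot := (hF1.add hFmid).add hF3
    have heq : (fun t : ℝ => ((Q + 0 * t) / (1 + (-1) * t) * Real.logb 2 ((Q + 0 * t) / ((1 + (-1) * t) * P))
          + ∑ k ∈ Finset.Icc (i+1) (j-1),
            (q k + 0 * t) / (1 + (-1) * t) * Real.logb 2 ((q k + 0 * t) / ((1 + (-1) * t) * p k)))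
          + (S + (-1) * t) / (1 + (-1) * t) * Real.logb 2 ((S + (-1) * t) / ((1 + (-1) * t) * T)))
        = (fun σ => R 0 σ) := by
      funext t
      rw [hR]
      norm_num [sub_eq_add_neg]
    rw [← heq]
    convert htot using 1
    · rfl
    · rfl
    · rfl
    rw [hD, hratio1, hratio2]
    have eA1 : ∑ k ∈ Finset.Icc (i+1) (j-1), (0 - q k * (-1)) * Real.logb 2 (q k / p k)
        = (∑ k ∈ Finset.Icc (i+1) (j-1), q k * Real.logb 2 (q k / p k)) := by
      exact Finset.sum_congr rfl fun k _ => by ring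
    have eA2 : ∑ k ∈ Finset.Icc (i+1) (j-1), (0 - q k * (-1))
        = (∑ k ∈ Finset.Icc (i+1) (j-1), q k) := by
      exact Finset.sum_congr rfl fun k _ => by ring
    rw [Finset.sum_add_distrib, ← Finset.sum_div, eA1, eA2]
    linear_combination -hsum1 / Real.log 2
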